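/- Let V be a ℤ-graded conformal vertex algebra. The map R_V → gr_F A(V) sending a + C₂(V)_p to the symbol of a in F_p A(V)/F_{p−1} A(V) is a well-defined surjective homomorphism of graded Poisson algebras, where A(V) = V/O(V) is Zhu's algebra with filtration F_p A(V) = image of V_{≤p}, and the Poisson structure on gr_F A(V) comes from the multiplication * and commutator. -/

import Mathlib

/-- The generalized binomial coefficient `(p choose i)` for `p : ℤ`, as a complex number. -/
noncomputable def cc (p : ℤ) (i : ℕ) : ℂ :=
  (∏ k ∈ Finset.range i, ((p : ℂ) - (k : ℂ))) / (Nat.factorial i : ℂ)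

/-- A vertex algebra structure on a complex vector space `V`: a vacuum `one`,
bilinear products `nmul n a b = a_{(n)} b`, truncation, vacuum axioms, and the
Borcherds identity. -/
structure VertexAlg (V : Type*) [AddCommGroup V] [Module ℂ V] where
  one : V
  nmul : ℤ → V → V → V
  nmul_add_left : ∀ (n : ℤ) (a b c : V), nmul n (a + b) c = nmul n a c + nmul n b c
  nmul_add_right : ∀ (n : ℤ) (a b c : V), nmul n a (b + c) = nmul n a b + nmul n a c
  nmul_smul_left : ∀ (n : ℤ) (s : ℂ) (a b : V), nmul n (s • a) b = s • nmul n a b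
  nmul_smul_right : ∀ (n : ℤ) (s : ℂ) (a b : V), nmul n a (s • b) = s • nmul n a b
  one_nmul : ∀ (n : ℤ) (b : V), nmul n one b = if n = -1 then b else 0
  nmul_neg_one_one : ∀ a : V, nmul (-1) a one = a
  nmul_one : ∀ (a : V) (n : ℤ), 0 ≤ n → nmul n a one = 0
  trunc : ∀ a b : V, ∃ N : ℤ, ∀ n : ℤ, N ≤ n → nmul n a b = 0
  borcherds : ∀ (p q r : ℤ) (a b c : V),
    (∑ᶠ i : ℕ, cc p i • nmul (p + q - i) (nmul (r + i) a b) c)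
      = ∑ᶠ i : ℕ, ((-1 : ℂ) ^ i * cc r i) •
          (nmul (p + r - i) a (nmul (q + i) b c)
            - ((-1 : ℂ) ^ r) • nmul (q + r - i) b (nmul (p + i) a c))

/-- A module over a vertex algebra `(V, 𝒱)`: operators `act n a = a_{(n)}` on `M`
satisfying bilinearity, the vacuum axiom, truncation and the Borcherds identity. -/
structure VAModuleStr {V : Type*} [AddCommGroup V] [Module ℂ V] (𝒱 : VertexAlg V)
    (M : Type*) [AddCommGroup M] [Module ℂ M] where
  act : ℤ → V → M → M
  act_add_left : ∀ (n : ℤ) (a b : V) (m : M), act n (a + b) m = act n a m + act n b m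
  act_add_right : ∀ (n : ℤ) (a : V) (m m' : M), act n a (m + m') = act n a m + act n a m'
  act_smul_left : ∀ (n : ℤ) (s : ℂ) (a : V) (m : M), act n (s • a) m = s • act n a m
  act_smul_right : ∀ (n : ℤ) (s : ℂ) (a : V) (m : M), act n a (s • m) = s • act n a m
  one_act : ∀ (n : ℤ) (m : M), act n 𝒱.one m = if n = -1 then m else 0
  trunc : ∀ (a : V) (m : M), ∃ N : ℤ, ∀ n : ℤ, N ≤ n → act n a m = 0
  borcherds : ∀ (p q r : ℤ) (a b : V) (m : M),
    (∑ᶠ i : ℕ, cc p i • act (p + q - i) (𝒱.nmul (r + i) a b) m)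
      = ∑ᶠ i : ℕ, ((-1 : ℂ) ^ i * cc r i) •
          (act (p + r - i) a (act (q + i) b m)
            - ((-1 : ℂ) ^ r) • act (q + r - i) b (act (p + i) a m))



lemma cc_zero (p : ℤ) : cc p 0 = 1 := by simp [cc]

lemma cc_succ (p : ℤ) (i : ℕ) : cc p (i + 1) = cc p i * (((p : ℂ) - i) / (i + 1)) := by
  have hfac : ((Nat.factorial i : ℂ)) ≠ 0 := by
    exact_mod_cast Nat.cast_ne_zero.mpr (Nat.factorial_ne_zero i)
  have hi1 : ((i : ℂ) + 1) ≠ 0 := by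
    have := Nat.cast_add_one_ne_zero (R := ℂ) i
    exact_mod_cast this
  rw [cc, cc, Finset.prod_range_succ, Nat.factorial_succ]
  push_cast
  rw [div_mul_div_comm, mul_comm ((i:ℂ)+1)]

lemma cc_one (p : ℤ) : cc p 1 = (p : ℂ) := by
  rw [show (1:ℕ) = 0 + 1 from rfl, cc_succ, cc_zero]
  simp

lemma cc_zero_left (i : ℕ) : cc 0 (i + 1) = 0 := by
  rw [cc]
  rw [Finset.prod_eq_zero (Finset.mem_range.mpr (Nat.succ_pos i))]
  · simp
  · simp

lemma cc_neg_one (i : ℕ) : cc (-1) i = (-1 : ℂ) ^ i := by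
  induction i with
  | zero => simp [cc_zero]
  | succ n ih =>
      rw [cc_succ, ih]
      have hi1 : ((n : ℂ) + 1) ≠ 0 := by
        have := Nat.cast_add_one_ne_zero (R := ℂ) n
        exact_mod_cast this
      push_cast
      field_simp
      ring

/-- finsum over ℕ with support in `range N` -/
lemma fs_range {M : Type*} [AddCommMonoid M] (f : ℕ → M) (N : ℕ)
    (h : ∀ i, N ≤ i → f i = 0) : ∑ᶠ i, f i = ∑ i ∈ Finset.range N, f i := by
  apply finsum_eq_finset_sum_of_support_subset
  intro i hi
  simp only [Function.mem_support] at hi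
  simp only [Finset.coe_range, Set.mem_Iio]
  by_contra hN
  exact hi (h i (le_of_not_gt hN))

lemma fs_single {M : Type*} [AddCommMonoid M] (f : ℕ → M)
    (h : ∀ i, 1 ≤ i → f i = 0) : ∑ᶠ i, f i = f 0 := by
  rw [fs_range f 1 h, Finset.sum_range_one]

lemma fs_two {M : Type*} [AddCommMonoid M] (f : ℕ → M)
    (h : ∀ i, 2 ≤ i → f i = 0) : ∑ᶠ i, f i = f 0 + f 1 := by
  rw [fs_range f 2 h, Finset.sum_range_succ, Finset.sum_range_one]

lemma sum_if01 {M : Type*} [AddCommMonoid M] (A B : M) (N : ℕ) (hN : 2 ≤ N) :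
    (∑ i ∈ Finset.range N, (if i = 0 then A else if i = 1 then B else 0)) = A + B := by
  induction N with
  | zero => omega
  | succ n ih =>
      rcases Nat.lt_or_ge n 2 with h2 | h2
      · interval_cases n
        · omega
        · simp [Finset.sum_range_succ]
      · rw [Finset.sum_range_succ, ih h2]
        have : ¬ (n = 0) := by omega
        have : ¬ (n = 1) := by omega
        simp [*]

lemma sum_if0 {M : Type*} [AddCommMonoid M] (A : M) (N : ℕ) (hN : 1 ≤ N) :
    (∑ i ∈ Finset.range N, (if i = 0 then A else 0)) = A := by
  rw [Finset.sum_ite_eq' (Finset.range N) 0 (fun _ => A)]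
  have : (0:ℕ) ∈ Finset.range N := Finset.mem_range.mpr (by omega)
  simp [this]


namespace VertexAlg

variable {V : Type*} [AddCommGroup V] [Module ℂ V] (𝒱 : VertexAlg V)

lemma nz_left (n : ℤ) (b : V) : 𝒱.nmul n 0 b = 0 := by
  have h := 𝒱.nmul_smul_left n 0 0 b
  simpa using h

lemma nz_right (n : ℤ) (a : V) : 𝒱.nmul n a 0 = 0 := by
  have h := 𝒱.nmul_smul_right n 0 a 0
  simpa using h

/-- bilinear map version of nmul -/
noncomputable def L (n : ℤ) : V →ₗ[ℂ] V →ₗ[ℂ] V :=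
  LinearMap.mk₂ ℂ (𝒱.nmul n) (𝒱.nmul_add_left n) (fun s a b => 𝒱.nmul_smul_left n s a b)
    (𝒱.nmul_add_right n) (fun s a b => 𝒱.nmul_smul_right n s a b)

@[simp] lemma L_apply (n : ℤ) (a b : V) : 𝒱.L n a b = 𝒱.nmul n a b := rfl

/-- D1: `T(a_{(r)} b) = a_{(r)} (Tb) - r a_{(r-1)} b`. -/
lemma D1 (r : ℤ) (a b : V) :
    𝒱.nmul (-2) (𝒱.nmul r a b) 𝒱.one
      = 𝒱.nmul r a (𝒱.nmul (-2) b 𝒱.one) - (r : ℂ) • 𝒱.nmul (r - 1) a b := by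
  have H := 𝒱.borcherds 0 (-2) r a b 𝒱.one
  have h1 : (∑ᶠ i : ℕ, cc 0 i • 𝒱.nmul (0 + -2 - (i : ℤ)) (𝒱.nmul (r + (i : ℤ)) a b) 𝒱.one)
      = 𝒱.nmul (-2) (𝒱.nmul r a b) 𝒱.one := by
    refine (fs_single _ ?_).trans ?_
    · intro i hi
      obtain ⟨j, rfl⟩ : ∃ j, i = j + 1 := ⟨i - 1, by omega⟩
      rw [cc_zero_left]; simp
    · norm_num [cc_zero]
  have h2 : (∑ᶠ i : ℕ, ((-1 : ℂ) ^ i * cc r i) •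
        (𝒱.nmul (0 + r - (i : ℤ)) a (𝒱.nmul (-2 + (i : ℤ)) b 𝒱.one)
          - ((-1 : ℂ) ^ (r : ℤ)) • 𝒱.nmul (-2 + r - (i : ℤ)) b (𝒱.nmul (0 + (i : ℤ)) a 𝒱.one)))
      = 𝒱.nmul r a (𝒱.nmul (-2) b 𝒱.one) - (r : ℂ) • 𝒱.nmul (r - 1) a b := by
    refine (fs_two _ ?_).trans ?_
    · intro i hi
      rw [𝒱.nmul_one b (-2 + (i : ℤ)) (by omega), 𝒱.nmul_one a (0 + (i : ℤ)) (by omega),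
        𝒱.nz_right, 𝒱.nz_right]
      simp
    · rw [𝒱.nmul_one a (0 + ((0 : ℕ) : ℤ)) (by norm_num),
        𝒱.nmul_one a (0 + ((1 : ℕ) : ℤ)) (by norm_num),
        𝒱.nz_right, 𝒱.nz_right]
      have e2 : 𝒱.nmul (-2 + ((1 : ℕ) : ℤ)) b 𝒱.one = b := by
        norm_num [𝒱.nmul_neg_one_one]
      rw [e2]
      norm_num [cc_zero, cc_one]
      abel
  rw [h1, h2] at H
  exact H

/-- D2 (skew-symmetry consequence). -/
lemma D2 (n : ℤ) (a b : V) :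
    (∑ᶠ j : ℕ, cc (-1) j • 𝒱.nmul (-2 - (j : ℤ)) (𝒱.nmul (n + (j : ℤ)) a b) 𝒱.one)
      = 𝒱.nmul (n - 1) a b - ((-1 : ℂ) ^ n) • 𝒱.nmul (n - 1) b a := by
  have H := 𝒱.borcherds (-1) (-1) n a b 𝒱.one
  have h1 : (∑ᶠ i : ℕ, cc (-1) i • 𝒱.nmul (-1 + -1 - (i : ℤ)) (𝒱.nmul (n + (i : ℤ)) a b) 𝒱.one)
      = ∑ᶠ j : ℕ, cc (-1) j • 𝒱.nmul (-2 - (j : ℤ)) (𝒱.nmul (n + (j : ℤ)) a b) 𝒱.one := by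
    refine finsum_congr fun i => ?_
    norm_num
  have h2 : (∑ᶠ i : ℕ, ((-1 : ℂ) ^ i * cc n i) •
        (𝒱.nmul (-1 + n - (i : ℤ)) a (𝒱.nmul (-1 + (i : ℤ)) b 𝒱.one)
          - ((-1 : ℂ) ^ (n : ℤ)) • 𝒱.nmul (-1 + n - (i : ℤ)) b (𝒱.nmul (-1 + (i : ℤ)) a 𝒱.one)))
      = 𝒱.nmul (n - 1) a b - ((-1 : ℂ) ^ n) • 𝒱.nmul (n - 1) b a := by
    refine (fs_single _ ?_).trans ?_
    · intro i hi
      rw [𝒱.nmul_one b (-1 + (i : ℤ)) (by omega), 𝒱.nmul_one a (-1 + (i : ℤ)) (by omega),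
        𝒱.nz_right, 𝒱.nz_right]
      simp
    · have e2 : 𝒱.nmul (-1 + ((0 : ℕ) : ℤ)) b 𝒱.one = b := by
        norm_num [𝒱.nmul_neg_one_one]
      have e3 : 𝒱.nmul (-1 + ((0 : ℕ) : ℤ)) a 𝒱.one = a := by
        norm_num [𝒱.nmul_neg_one_one]
      rw [e2, e3]
      norm_num [cc_zero]
      rw [show (-1 : ℤ) + n = n - 1 by ring]
  rw [h1, h2] at H
  exact H

end VertexAlg

namespace VertexAlg

section Graded

variable {V : Type*} [AddCommGroup V] [Module ℂ V] (𝒱 : VertexAlg V)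
variable (Vd : ℤ → Submodule ℂ V) (OV : Submodule ℂ V)

/-- the sum of all graded pieces of weight at most `q` -/
noncomputable def Vle (q : ℤ) : Submodule ℂ V := ⨆ d ∈ {d : ℤ | d ≤ q}, Vd d

lemma Vd_le_Vle {d q : ℤ} (h : d ≤ q) : Vd d ≤ Vle Vd q :=
  le_biSup Vd h

lemma Vle_mono {q q' : ℤ} (h : q ≤ q') : Vle Vd q ≤ Vle Vd q' :=
  iSup₂_le fun d hd => le_biSup Vd (le_trans hd h)

lemma Vle_succ (p : ℤ) : Vle Vd p = Vd p ⊔ Vle Vd (p - 1) := by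
  apply le_antisymm
  · refine iSup₂_le fun d hd => ?_
    have hd' : d ≤ p := hd
    rcases eq_or_lt_of_le hd' with rfl | h
    · exact le_sup_left
    · exact le_sup_of_le_right (le_biSup Vd (show d ≤ p - 1 by omega))
  · exact sup_le (le_biSup Vd (le_refl p)) (Vle_mono Vd (by omega))

variable (hOV : OV = Submodule.span ℂ {y : V | ∃ (d : ℤ) (a b : V), a ∈ Vd d ∧
      y = ∑ᶠ i : ℕ, cc d i • 𝒱.nmul ((i : ℤ) - 2) a b})

include hOV in
lemma gen_mem (d : ℤ) (a b : V) (ha : a ∈ Vd d) :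
    (∑ᶠ i : ℕ, cc d i • 𝒱.nmul ((i : ℤ) - 2) a b) ∈ OV := by
  rw [hOV]
  exact Submodule.subset_span ⟨d, a, b, ha, rfl⟩

include hOV in
/-- L1 : for homogeneous `y` of weight `w`, `T y + w y ∈ O(V)`. -/
lemma L1 {w : ℤ} {y : V} (hy : y ∈ Vd w) :
    𝒱.nmul (-2) y 𝒱.one + (w : ℂ) • y ∈ OV := by
  have g := gen_mem 𝒱 Vd OV hOV w y 𝒱.one hy
  have h : (∑ᶠ i : ℕ, cc w i • 𝒱.nmul ((i : ℤ) - 2) y 𝒱.one)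
      = 𝒱.nmul (-2) y 𝒱.one + (w : ℂ) • y := by
    refine (fs_two _ ?_).trans ?_
    · intro i hi
      rw [𝒱.nmul_one y ((i : ℤ) - 2) (by omega)]
      simp
    · have e0 : ((0 : ℕ) : ℤ) - 2 = -2 := by norm_num
      have e1 : 𝒱.nmul (((1 : ℕ) : ℤ) - 2) y 𝒱.one = y := by
        norm_num [𝒱.nmul_neg_one_one]
      rw [e0, e1, cc_zero, cc_one, one_smul]
  rwa [h] at g

/-- LT : `T(T^{(j)} y) = (j+1) T^{(j+1)} y`. -/
lemma LT (j : ℕ) (y : V) :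
    𝒱.nmul (-2) (𝒱.nmul (-1 - (j : ℤ)) y 𝒱.one) 𝒱.one
      = ((j : ℂ) + 1) • 𝒱.nmul (-2 - (j : ℤ)) y 𝒱.one := by
  have h := 𝒱.D1 (-1 - (j : ℤ)) y 𝒱.one
  have e0 : 𝒱.nmul (-2) 𝒱.one 𝒱.one = 0 := by
    rw [𝒱.one_nmul]; norm_num
  rw [e0, 𝒱.nz_right] at h
  rw [h]
  rw [show (-1 - (j : ℤ)) - 1 = -2 - (j : ℤ) by ring]
  push_cast
  module

variable (hone : 𝒱.one ∈ Vd 0)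
variable (hgr : ∀ (d e n : ℤ) (a b : V), a ∈ Vd d → b ∈ Vd e →
      𝒱.nmul n a b ∈ Vd (d + e - n - 1))

include hgr hone in
lemma Tk_mem {w : ℤ} {y : V} (hy : y ∈ Vd w) (j : ℕ) :
    𝒱.nmul (-1 - (j : ℤ)) y 𝒱.one ∈ Vd (w + j) := by
  have h := hgr w 0 (-1 - (j : ℤ)) y 𝒱.one hy hone
  rwa [show w + 0 - (-1 - (j : ℤ)) - 1 = w + j by ring] at h

include hOV hgr hone in
/-- ML1 : `T^{(j)} y ≡ cc (-w) j • y` modulo `O(V)` for `y` of weight `w`. -/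
lemma ML1 {w : ℤ} {y : V} (hy : y ∈ Vd w) (j : ℕ) :
    𝒱.nmul (-1 - (j : ℤ)) y 𝒱.one - cc (-w) j • y ∈ OV := by
  induction j with
  | zero =>
      have e : 𝒱.nmul (-1 - ((0 : ℕ) : ℤ)) y 𝒱.one = y := by
        norm_num [𝒱.nmul_neg_one_one]
      rw [e, cc_zero, one_smul, sub_self]
      exact OV.zero_mem
  | succ j ih =>
      have htk : 𝒱.nmul (-1 - (j : ℤ)) y 𝒱.one ∈ Vd (w + j) :=
        Tk_mem 𝒱 Vd hone hgr hy j
      have h1 := L1 𝒱 Vd OV hOV htk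
      rw [LT] at h1
      -- h1 : ((j:ℂ)+1) • Tk (j+1) y + ((w+j : ℤ):ℂ) • Tk j y ∈ OV
      have h2 : ((j : ℂ) + 1) • 𝒱.nmul (-2 - (j : ℤ)) y 𝒱.one
          + (((w : ℂ) + (j : ℂ))) • (cc (-w) j • y) ∈ OV := by
        have := OV.sub_mem h1 (OV.smul_mem (((w : ℂ) + (j : ℂ))) ih)
        have ecast : (((w + (j : ℕ) : ℤ)) : ℂ) = (w : ℂ) + (j : ℂ) := by push_cast; ring
        rw [ecast] at this
        convert this using 1
        module
      have h3 : 𝒱.nmul (-1 - ((j + 1 : ℕ) : ℤ)) y 𝒱.one - cc (-w) (j + 1) • y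
          = (((j : ℂ) + 1))⁻¹ • (((j : ℂ) + 1) • 𝒱.nmul (-2 - (j : ℤ)) y 𝒱.one
            + (((w : ℂ) + (j : ℂ))) • (cc (-w) j • y)) := by
        have hj : ((j : ℂ) + 1) ≠ 0 := by
          have := Nat.cast_add_one_ne_zero (R := ℂ) j
          exact_mod_cast this
        have eidx : (-1 - ((j + 1 : ℕ) : ℤ)) = -2 - (j : ℤ) := by push_cast; ring
        rw [eidx, cc_succ]
        have ecc : ((-w : ℤ) : ℂ) - (j : ℂ) = -((w : ℂ) + (j : ℂ)) := by push_cast; ring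
        rw [ecc]
        match_scalars
        · field_simp
        · field_simp
      rw [h3]
      exact OV.smul_mem _ h2

include hOV hgr in
/-- R2 : reduction of a homogeneous `C₂`-generator. -/
lemma R2 {d e : ℤ} {a b : V} (ha : a ∈ Vd d) (hb : b ∈ Vd e) :
    𝒱.nmul (-2) a b ∈ OV ⊔ Vle Vd (d + e) := by
  obtain ⟨N₀, hN₀⟩ := 𝒱.trunc a b
  set N : ℕ := (N₀ + 2).toNat + 2 with hN
  have hvan : ∀ i : ℕ, N ≤ i → cc d i • 𝒱.nmul ((i : ℤ) - 2) a b = 0 := by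
    intro i hi
    rw [hN₀ ((i : ℤ) - 2) (by omega), smul_zero]
  have g := gen_mem 𝒱 Vd OV hOV d a b ha
  rw [fs_range _ N hvan] at g
  have h0 : (0 : ℕ) ∈ Finset.range N := Finset.mem_range.mpr (by omega)
  rw [← Finset.add_sum_erase _ _ h0] at g
  have e0 : cc d 0 • 𝒱.nmul (((0 : ℕ) : ℤ) - 2) a b = 𝒱.nmul (-2) a b := by
    norm_num [cc_zero]
  rw [e0] at g
  have hrest : (∑ i ∈ (Finset.range N).erase 0, cc d i • 𝒱.nmul ((i : ℤ) - 2) a b)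
      ∈ Vle Vd (d + e) := by
    refine Submodule.sum_mem _ fun i hi => Submodule.smul_mem _ _ ?_
    have hi0 : i ≠ 0 := (Finset.mem_erase.mp hi).1
    have hmem := hgr d e ((i : ℤ) - 2) a b ha hb
    exact Vd_le_Vle Vd (show d + e - ((i : ℤ) - 2) - 1 ≤ d + e by omega) hmem
  have : 𝒱.nmul (-2) a b
      = (𝒱.nmul (-2) a b + ∑ i ∈ (Finset.range N).erase 0, cc d i • 𝒱.nmul ((i : ℤ) - 2) a b)
        - ∑ i ∈ (Finset.range N).erase 0, cc d i • 𝒱.nmul ((i : ℤ) - 2) a b := by abel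
  rw [this]
  exact Submodule.sub_mem _ (Submodule.mem_sup_left g) (Submodule.mem_sup_right hrest)

end Graded

end VertexAlg

namespace VertexAlg

/-- span of the binomial functions `v ↦ cc (-v) j` -/
noncomputable def SS : Submodule ℂ (ℤ → ℂ) :=
  Submodule.span ℂ {h : ℤ → ℂ | ∃ j : ℕ, h = fun v => cc (-v) j}

lemma SS_one : (fun _ : ℤ => (1 : ℂ)) ∈ SS :=
  Submodule.subset_span ⟨0, funext fun v => (cc_zero _).symm⟩

lemma SS_mul (μ : ℂ) {h : ℤ → ℂ} (hh : h ∈ SS) :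
    (fun v : ℤ => ((v : ℂ) - μ) * h v) ∈ SS := by
  let Φ : (ℤ → ℂ) →ₗ[ℂ] (ℤ → ℂ) :=
    { toFun := fun g => fun v => ((v : ℂ) - μ) * g v
      map_add' := by intro g g'; funext v; simp; ring
      map_smul' := by intro s g; funext v; simp; ring }
  have hmap : Submodule.map Φ SS ≤ SS := by
    rw [SS, Submodule.map_span, Submodule.span_le]
    rintro _ ⟨_, ⟨j, rfl⟩, rfl⟩
    have key : (Φ (fun v => cc (-v) j))
        = (-((j : ℂ) + 1)) • (fun v : ℤ => cc (-v) (j + 1))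
          + (-((j : ℂ) + μ)) • (fun v : ℤ => cc (-v) j) := by
      funext v
      show ((v : ℂ) - μ) * cc (-v) j
        = -((j : ℂ) + 1) * cc (-v) (j + 1) + -((j : ℂ) + μ) * cc (-v) j
      rw [cc_succ]
      push_cast
      have hj : ((j : ℂ) + 1) ≠ 0 := by
        have := Nat.cast_add_one_ne_zero (R := ℂ) j
        exact_mod_cast this
      field_simp
      ring
    rw [key]
    exact Submodule.add_mem _
      (Submodule.smul_mem _ _ (Submodule.subset_span ⟨j + 1, rfl⟩))
      (Submodule.smul_mem _ _ (Submodule.subset_span ⟨j, rfl⟩))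
  exact hmap ⟨h, hh, rfl⟩

lemma SS_prod (B : Finset ℤ) :
    (fun v : ℤ => ∏ m ∈ B, ((v : ℂ) - (m : ℂ))) ∈ SS := by
  classical
  induction B using Finset.induction with
  | empty => simpa using SS_one
  | insert m B hmB ih =>
      have e : (fun v : ℤ => ∏ m' ∈ insert m B, ((v : ℂ) - (m' : ℂ)))
          = fun v : ℤ => ((v : ℂ) - (m : ℂ)) * ∏ m' ∈ B, ((v : ℂ) - (m' : ℂ)) :=
        funext fun v => Finset.prod_insert hmB
      rw [e]
      exact SS_mul (m : ℂ) ih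

section Master

variable {V : Type*} [AddCommGroup V] [Module ℂ V] (𝒱 : VertexAlg V)
variable (Vd : ℤ → Submodule ℂ V) (OV : Submodule ℂ V)
variable (hOV : OV = Submodule.span ℂ {y : V | ∃ (d : ℤ) (a b : V), a ∈ Vd d ∧
      y = ∑ᶠ i : ℕ, cc d i • 𝒱.nmul ((i : ℤ) - 2) a b})
variable (hone : 𝒱.one ∈ Vd 0)
variable (hgr : ∀ (d e n : ℤ) (a b : V), a ∈ Vd d → b ∈ Vd e →
      𝒱.nmul n a b ∈ Vd (d + e - n - 1))

include hOV hone hgr in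
lemma master {p : ℤ} {x : V} (hx : x ∈ Vd p) (f : ℤ →₀ V)
    (hf : ∀ w, f w ∈ Vd w)
    (hred : ∀ w ∈ f.support, f w ∈ OV ⊔ Vle Vd (w - 1))
    (hsum : (f.sum fun _ v => v) = x) :
    x ∈ OV ⊔ Vle Vd (p - 1) := by
  classical
  set K := f.support with hK
  set B : Finset ℤ := K.filter (fun w => p < w) with hB
  let Φ : (ℤ → ℂ) →ₗ[ℂ] V :=
    { toFun := fun h => (∑ w ∈ K, h w • f w) - h p • x
      map_add' := by
        intro g g'
        simp only [Pi.add_apply, add_smul, Finset.sum_add_distrib]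
        abel
      map_smul' := by
        intro s g
        simp only [Pi.smul_apply, smul_eq_mul, mul_smul, ← Finset.smul_sum, RingHom.id_apply,
          smul_sub] }
  have hΦ : ∀ h : ℤ → ℂ, Φ h = (∑ w ∈ K, h w • f w) - h p • x := fun h => rfl
  -- each generator of SS is mapped into OV
  have hgen : ∀ j : ℕ, Φ (fun v => cc (-v) j) ∈ OV := by
    intro j
    have hx1 : 𝒱.nmul (-1 - (j : ℤ)) x 𝒱.one - cc (-p) j • x ∈ OV :=
      ML1 𝒱 Vd OV hOV hone hgr hx j
    have hlin : 𝒱.nmul (-1 - (j : ℤ)) x 𝒱.one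
        = ∑ w ∈ K, 𝒱.nmul (-1 - (j : ℤ)) (f w) 𝒱.one := by
      conv_lhs => rw [← hsum, Finsupp.sum]
      show ((𝒱.L (-1 - (j : ℤ))).flip 𝒱.one) (∑ w ∈ K, f w)
        = ∑ w ∈ K, ((𝒱.L (-1 - (j : ℤ))).flip 𝒱.one) (f w)
      exact map_sum _ _ _
    have hkey : Φ (fun v => cc (-v) j)
        = (𝒱.nmul (-1 - (j : ℤ)) x 𝒱.one - cc (-p) j • x)
          - ∑ w ∈ K, (𝒱.nmul (-1 - (j : ℤ)) (f w) 𝒱.one - cc (-w) j • f w) := by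
      rw [hΦ, Finset.sum_sub_distrib, ← hlin]
      abel
    rw [hkey]
    exact Submodule.sub_mem _ hx1
      (Submodule.sum_mem _ fun w _ => ML1 𝒱 Vd OV hOV hone hgr (hf w) j)
  have hSU : SS ≤ Submodule.comap Φ OV := by
    rw [SS, Submodule.span_le]
    rintro _ ⟨j, rfl⟩
    exact hgen j
  set c : ℂ := ∏ m ∈ B, ((p : ℂ) - (m : ℂ)) with hc
  have hcne : c ≠ 0 := by
    rw [hc]
    refine Finset.prod_ne_zero_iff.mpr fun m hm => sub_ne_zero.mpr fun hpm => ?_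
    have hpm' : p = m := by exact_mod_cast hpm
    have := (Finset.mem_filter.mp hm).2
    omega
  set R : ℤ → ℂ := fun v => 1 - c⁻¹ * ∏ m ∈ B, ((v : ℂ) - (m : ℂ)) with hRdef
  have hR : R ∈ SS := by
    have h1 : R = (fun _ : ℤ => (1 : ℂ))
        + (-c⁻¹) • (fun v : ℤ => ∏ m ∈ B, ((v : ℂ) - (m : ℂ))) := by
      funext v
      simp [hRdef]
      ring
    rw [h1]
    exact Submodule.add_mem _ SS_one (Submodule.smul_mem _ _ (SS_prod B))
  have hΦR : Φ R ∈ OV := hSU hR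
  have hRp : R p = 0 := by
    rw [hRdef]
    simp only
    rw [inv_mul_cancel₀ hcne]
    ring
  have hsum' : (∑ w ∈ K, R w • f w) ∈ OV := by
    rw [hΦ, hRp, zero_smul, sub_zero] at hΦR
    exact hΦR
  have hxe : x = (∑ w ∈ K, R w • f w) + ∑ w ∈ K, (1 - R w) • f w := by
    rw [← Finset.sum_add_distrib, ← hsum, Finsupp.sum]
    refine Finset.sum_congr rfl fun w _ => ?_
    rw [← add_smul]
    module
  rw [hxe]
  refine Submodule.add_mem _ (Submodule.mem_sup_left hsum')
    (Submodule.sum_mem _ fun w hw => ?_)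
  by_cases hwB : w ∈ B
  · have hRw : R w = 1 := by
      rw [hRdef]
      simp only
      rw [Finset.prod_eq_zero hwB (by simp)]
      ring
    rw [hRw, sub_self, zero_smul]
    exact Submodule.zero_mem _
  · have hwp : w ≤ p := by
      by_contra hcon
      exact hwB (Finset.mem_filter.mpr ⟨hw, by omega⟩)
    refine Submodule.smul_mem _ _ ?_
    exact (sup_le_sup_left (Vle_mono Vd (by omega)) OV) (hred w hw)

end Master

end VertexAlg


open VertexAlg

/-- For a ℤ-graded conformal vertex algebra `V` (grading `Vd` by
conformal weight, compatible with the products), the map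
`R_V → gr_F A(V)`, `a + C₂(V)_p ↦ symbol of a in F_p A(V)/F_{p-1} A(V)`,
is a well-defined surjective homomorphism of graded Poisson algebras.  Here
`A(V) = V/O(V)` is Zhu's algebra with Zhu product `*` and weight filtration `F`, and
the Poisson structure on `gr_F A(V)` comes from `*` and its commutator.
This is expressed by:
(1) `C₂(V) ∩ V_p` maps into `F_{p-1} A(V)` (well-definedness);
(2) the image of `V_p` together with `F_{p-1} A(V)` is all of `F_p A(V)` (surjectivity);
(3) modulo `F_{p+q-1}`, the Zhu product `a * b` of `a ∈ V_p`, `b ∈ V_q` agrees with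
    `a_{(-1)} b` (multiplicativity);
(4) modulo `F_{p+q-2}`, the commutator `a * b - b * a` agrees with `a_{(0)} b`
    (compatibility of the Poisson brackets). -/
theorem stmt11 {V : Type*} [AddCommGroup V] [Module ℂ V] (𝒱 : VertexAlg V)
    (Vd : ℤ → Submodule ℂ V)
    (htop : (⨆ d, Vd d) = ⊤)
    (hone : 𝒱.one ∈ Vd 0)
    (hgr : ∀ (d e n : ℤ) (a b : V), a ∈ Vd d → b ∈ Vd e →
      𝒱.nmul n a b ∈ Vd (d + e - n - 1))
    (C2V : Submodule ℂ V)
    (hC2V : C2V = Submodule.span ℂ {y : V | ∃ a b : V, y = 𝒱.nmul (-2) a b})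
    (OV : Submodule ℂ V)
    (hOV : OV = Submodule.span ℂ {y : V | ∃ (d : ℤ) (a b : V), a ∈ Vd d ∧
      y = ∑ᶠ i : ℕ, cc d i • 𝒱.nmul ((i : ℤ) - 2) a b})
    (zmul : ℤ → V → V → V)
    (hzmul : ∀ (d : ℤ) (a b : V),
      zmul d a b = ∑ᶠ i : ℕ, cc d i • 𝒱.nmul ((i : ℤ) - 1) a b)
    (F : ℤ → Submodule ℂ (V ⧸ OV))
    (hFdef : ∀ p : ℤ, F p = Submodule.map OV.mkQ (⨆ d ∈ {d : ℤ | d ≤ p}, Vd d)) :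
    (∀ p : ℤ, Submodule.map OV.mkQ (C2V ⊓ Vd p) ≤ F (p - 1)) ∧
    (∀ p : ℤ, Submodule.map OV.mkQ (Vd p) ⊔ F (p - 1) = F p) ∧
    (∀ (p q : ℤ) (a b : V), a ∈ Vd p → b ∈ Vd q →
      OV.mkQ (zmul p a b - 𝒱.nmul (-1) a b) ∈ F (p + q - 1)) ∧
    (∀ (p q : ℤ) (a b : V), a ∈ Vd p → b ∈ Vd q →
      OV.mkQ (zmul p a b - zmul q b a - 𝒱.nmul 0 a b) ∈ F (p + q - 2)) := by
  classical
  have hmkQ : ∀ (t : ℤ) (x : V), x ∈ OV ⊔ Vle Vd t → OV.mkQ x ∈ F t := by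
    intro t x hx
    rw [hFdef]
    obtain ⟨o, ho, v, hv, rfl⟩ := Submodule.mem_sup.mp hx
    have hzero : OV.mkQ o = 0 := by
      rwa [Submodule.mkQ_apply, Submodule.Quotient.mk_eq_zero]
    exact Submodule.mem_map.mpr ⟨v, hv, by rw [map_add, hzero, zero_add]⟩
  refine ⟨?_, ?_, ?_, ?_⟩
  -- ===================== Part (1) =====================
  · intro p z hz
    obtain ⟨x, hx, rfl⟩ := Submodule.mem_map.mp hz
    obtain ⟨hxC2, hxVd⟩ := Submodule.mem_inf.mp hx
    apply hmkQ
    set C2w : ℤ → Submodule ℂ V := fun w => Submodule.span ℂ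
      {y : V | ∃ (d e : ℤ) (u v : V), u ∈ Vd d ∧ v ∈ Vd e ∧ d + e + 1 = w ∧
        y = 𝒱.nmul (-2) u v} with hC2w
    have hxH : x ∈ ⨆ w : ℤ, C2w w := by
      suffices hle : C2V ≤ ⨆ w : ℤ, C2w w from hle hxC2
      rw [hC2V, Submodule.span_le]
      rintro _ ⟨u, v, rfl⟩
      have hu : u ∈ ⨆ d, Vd d := by rw [htop]; trivial
      have hv : v ∈ ⨆ d, Vd d := by rw [htop]; trivial
      obtain ⟨fu, hfu, hfueq⟩ := (Submodule.mem_iSup_iff_exists_finsupp _ _).mp hu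
      obtain ⟨fv, hfv, hfveq⟩ := (Submodule.mem_iSup_iff_exists_finsupp _ _).mp hv
      rw [← hfueq, ← hfveq, Finsupp.sum, Finsupp.sum]
      have hexp : 𝒱.nmul (-2) (∑ d ∈ fu.support, fu d) (∑ e ∈ fv.support, fv e)
          = ∑ d ∈ fu.support, ∑ e ∈ fv.support, 𝒱.nmul (-2) (fu d) (fv e) := by
        show 𝒱.L (-2) _ _ = _
        rw [map_sum (𝒱.L (-2)) _ fu.support, LinearMap.sum_apply]
        exact Finset.sum_congr rfl fun d _ => map_sum (𝒱.L (-2) (fu d)) _ fv.support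
      rw [hexp]
      refine Submodule.sum_mem _ fun d _ => Submodule.sum_mem _ fun e _ => ?_
      exact le_iSup C2w (d + e + 1)
        (Submodule.subset_span ⟨d, e, fu d, fv e, hfu d, hfv e, rfl, rfl⟩)
    obtain ⟨f, hfmem, hfsum⟩ := (Submodule.mem_iSup_iff_exists_finsupp _ _).mp hxH
    have hC2w_Vd : ∀ w, C2w w ≤ Vd w := by
      intro w
      rw [hC2w, Submodule.span_le]
      rintro _ ⟨d, e, u, v, hu, hv, hw, rfl⟩
      have := hgr d e (-2) u v hu hv
      rwa [show d + e - (-2) - 1 = w by omega] at this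
    have hC2w_red : ∀ w, C2w w ≤ OV ⊔ Vle Vd (w - 1) := by
      intro w
      rw [hC2w, Submodule.span_le]
      rintro _ ⟨d, e, u, v, hu, hv, hw, rfl⟩
      have := R2 𝒱 Vd OV hOV hgr hu hv
      rwa [show d + e = w - 1 by omega] at this
    exact master 𝒱 Vd OV hOV hone hgr hxVd f (fun w => hC2w_Vd w (hfmem w))
      (fun w hw => hC2w_red w (hfmem w)) hfsum
  -- ===================== Part (2) =====================
  · intro p
    rw [hFdef p, hFdef (p - 1), ← Submodule.map_sup]
    congr 1
    exact (Vle_succ Vd p).symm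
  -- ===================== Part (3) =====================
  · intro p q a b ha hb
    apply hmkQ
    obtain ⟨Na, hNa⟩ := 𝒱.trunc a b
    set N : ℕ := Na.toNat + 2 with hN
    have hNcast : (Na : ℤ) + 2 ≤ (N : ℤ) := by
      have := Int.self_le_toNat Na
      rw [hN]
      push_cast
      omega
    have hNa' : ∀ i : ℕ, N ≤ i → cc p i • 𝒱.nmul ((i : ℤ) - 1) a b = 0 := by
      intro i hi
      have : (N : ℤ) ≤ (i : ℤ) := by exact_mod_cast hi
      rw [hNa ((i : ℤ) - 1) (by omega), smul_zero]
    have hP : zmul p a b = ∑ i ∈ Finset.range N, cc p i • 𝒱.nmul ((i : ℤ) - 1) a b := by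
      rw [hzmul]
      exact fs_range _ N hNa'
    have h0 : (0 : ℕ) ∈ Finset.range N := Finset.mem_range.mpr (by omega)
    rw [hP, ← Finset.add_sum_erase _ _ h0]
    have e0 : cc p 0 • 𝒱.nmul (((0 : ℕ) : ℤ) - 1) a b = 𝒱.nmul (-1) a b := by
      norm_num [cc_zero]
    rw [e0]
    rw [show 𝒱.nmul (-1) a b
        + (∑ i ∈ (Finset.range N).erase 0, cc p i • 𝒱.nmul ((i : ℤ) - 1) a b)
        - 𝒱.nmul (-1) a b
        = ∑ i ∈ (Finset.range N).erase 0, cc p i • 𝒱.nmul ((i : ℤ) - 1) a b by abel]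
    refine Submodule.mem_sup_right
      (Submodule.sum_mem _ fun i hi => Submodule.smul_mem _ _ ?_)
    have hi0 : i ≠ 0 := (Finset.mem_erase.mp hi).1
    have hm := hgr p q ((i : ℤ) - 1) a b ha hb
    exact Vd_le_Vle Vd (by omega) hm
  -- ===================== Part (4) =====================
  · intro p q a b ha hb
    apply hmkQ
    set G : Submodule ℂ V := OV ⊔ Vle Vd (p + q - 2) with hG
    have hcmem : ∀ m : ℤ, 𝒱.nmul m a b ∈ Vd (p + q - 1 - m) := by
      intro m
      have := hgr p q m a b ha hb
      rwa [show p + q - m - 1 = p + q - 1 - m by ring] at this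
    have hlow : ∀ m : ℤ, 1 ≤ m → 𝒱.nmul m a b ∈ G := by
      intro m hm
      exact Submodule.mem_sup_right (Vd_le_Vle Vd (by omega) (hcmem m))
    have hOVG : OV ≤ G := le_sup_left
    obtain ⟨Na, hNa⟩ := 𝒱.trunc a b
    obtain ⟨Nb, hNb⟩ := 𝒱.trunc b a
    set N : ℕ := Na.toNat + Nb.toNat + 2 with hN
    have hNle : (2 : ℕ) ≤ N := by omega
    have hNcast : (Na : ℤ) + 2 ≤ (N : ℤ) ∧ (Nb : ℤ) + 2 ≤ (N : ℤ) := by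
      have h1 := Int.self_le_toNat Na
      have h2 := Int.self_le_toNat Nb
      constructor <;> (rw [hN]; push_cast; omega)
    have hNa2 : ∀ n : ℤ, (N : ℤ) - 2 ≤ n → 𝒱.nmul n a b = 0 := fun n hn =>
      hNa n (by omega)
    have hNb2 : ∀ n : ℤ, (N : ℤ) - 2 ≤ n → 𝒱.nmul n b a = 0 := fun n hn =>
      hNb n (by omega)
    set S : ℕ → V := fun i => ∑ j ∈ Finset.range N,
        cc (-1) j • 𝒱.nmul (-2 - (j : ℤ)) (𝒱.nmul ((i : ℤ) + (j : ℤ)) a b) 𝒱.one with hS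
    -- membership of the generic double-sum terms
    have hTkG : ∀ m : ℤ, 1 ≤ m → ∀ j : ℕ,
        𝒱.nmul (-2 - (j : ℤ)) (𝒱.nmul m a b) 𝒱.one ∈ G := by
      intro m hm j
      have h1 := ML1 𝒱 Vd OV hOV hone hgr (hcmem m) (j + 1)
      have eidx : (-1 - ((j + 1 : ℕ) : ℤ)) = -2 - (j : ℤ) := by push_cast; ring
      rw [eidx] at h1
      have hsplit : 𝒱.nmul (-2 - (j : ℤ)) (𝒱.nmul m a b) 𝒱.one
          = (𝒱.nmul (-2 - (j : ℤ)) (𝒱.nmul m a b) 𝒱.one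
              - cc (-(p + q - 1 - m)) (j + 1) • 𝒱.nmul m a b)
            + cc (-(p + q - 1 - m)) (j + 1) • 𝒱.nmul m a b := by abel
      rw [hsplit]
      exact Submodule.add_mem _ (hOVG h1) (Submodule.smul_mem _ _ (hlow m hm))
    -- skew-symmetry rewriting via D2
    have hD2 : ∀ i : ℕ, 𝒱.nmul ((i : ℤ) - 1) b a
        = ((-1 : ℂ) ^ i) • 𝒱.nmul ((i : ℤ) - 1) a b - ((-1 : ℂ) ^ i) • S i := by
      intro i
      have hD := 𝒱.D2 (i : ℤ) a b
      have hfin : (∑ᶠ j : ℕ,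
          cc (-1) j • 𝒱.nmul (-2 - (j : ℤ)) (𝒱.nmul ((i : ℤ) + (j : ℤ)) a b) 𝒱.one) = S i := by
        rw [hS]
        refine fs_range _ N fun j hj => ?_
        have : (N : ℤ) ≤ (j : ℤ) := by exact_mod_cast hj
        rw [hNa2 ((i : ℤ) + (j : ℤ)) (by omega), 𝒱.nz_left, smul_zero]
      rw [hfin] at hD
      have hz : ((-1 : ℂ)) ^ ((i : ℕ) : ℤ) = (-1 : ℂ) ^ i := zpow_natCast _ i
      rw [hz] at hD
      have hsq : ((-1 : ℂ) ^ i) * ((-1 : ℂ) ^ i) = 1 := by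
        rw [← pow_add]
        exact Even.neg_one_pow ⟨i, rfl⟩
      have h' : ((-1 : ℂ) ^ i) • 𝒱.nmul ((i : ℤ) - 1) b a
          = 𝒱.nmul ((i : ℤ) - 1) a b - S i := by
        rw [hD]; abel
      calc 𝒱.nmul ((i : ℤ) - 1) b a
          = (((-1 : ℂ) ^ i) * ((-1 : ℂ) ^ i)) • 𝒱.nmul ((i : ℤ) - 1) b a := by
            rw [hsq, one_smul]
        _ = ((-1 : ℂ) ^ i) • (((-1 : ℂ) ^ i) • 𝒱.nmul ((i : ℤ) - 1) b a) := mul_smul _ _ _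
        _ = ((-1 : ℂ) ^ i) • (𝒱.nmul ((i : ℤ) - 1) a b - S i) := by rw [h']
        _ = ((-1 : ℂ) ^ i) • 𝒱.nmul ((i : ℤ) - 1) a b - ((-1 : ℂ) ^ i) • S i :=
            smul_sub _ _ _
    set P : V := ∑ i ∈ Finset.range N, cc p i • 𝒱.nmul ((i : ℤ) - 1) a b with hPdef
    set Q1 : V := ∑ i ∈ Finset.range N, (cc q i * (-1 : ℂ) ^ i) • 𝒱.nmul ((i : ℤ) - 1) a b
      with hQ1def
    set Q2 : V := ∑ i ∈ Finset.range N, (cc q i * (-1 : ℂ) ^ i) • S i with hQ2def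
    have hPz : zmul p a b = P := by
      rw [hzmul, hPdef]
      refine fs_range _ N fun i hi => ?_
      have : (N : ℤ) ≤ (i : ℤ) := by exact_mod_cast hi
      rw [hNa2 ((i : ℤ) - 1) (by omega), smul_zero]
    have hQz : zmul q b a = ∑ i ∈ Finset.range N, cc q i • 𝒱.nmul ((i : ℤ) - 1) b a := by
      rw [hzmul]
      refine fs_range _ N fun i hi => ?_
      have : (N : ℤ) ≤ (i : ℤ) := by exact_mod_cast hi
      rw [hNb2 ((i : ℤ) - 1) (by omega), smul_zero]
    have hbreak : zmul q b a = Q1 - Q2 := by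
      rw [hQz, hQ1def, hQ2def, ← Finset.sum_sub_distrib]
      refine Finset.sum_congr rfl fun i _ => ?_
      rw [hD2 i, smul_sub, smul_smul, smul_smul]
    have hPmem : P - (𝒱.nmul (-1) a b + (p : ℂ) • 𝒱.nmul 0 a b) ∈ G := by
      have hterm : ∀ i ∈ Finset.range N, cc p i • 𝒱.nmul ((i : ℤ) - 1) a b
          - (if i = 0 then 𝒱.nmul (-1) a b
             else if i = 1 then (p : ℂ) • 𝒱.nmul 0 a b else 0) ∈ G := by
        intro i _
        rcases i with _ | _ | n
        · have e : ((0 : ℕ) : ℤ) - 1 = -1 := by norm_num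
          rw [if_pos rfl, e, cc_zero, one_smul, sub_self]
          exact G.zero_mem
        · have e : ((1 : ℕ) : ℤ) - 1 = 0 := by norm_num
          rw [if_neg (by omega), if_pos rfl, e, cc_one, sub_self]
          exact G.zero_mem
        · rw [if_neg (by omega), if_neg (by omega), sub_zero]
          exact Submodule.smul_mem _ _ (hlow _ (by push_cast; omega))
      have hsplit : P - (𝒱.nmul (-1) a b + (p : ℂ) • 𝒱.nmul 0 a b)
          = ∑ i ∈ Finset.range N, (cc p i • 𝒱.nmul ((i : ℤ) - 1) a b
            - (if i = 0 then 𝒱.nmul (-1) a b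
               else if i = 1 then (p : ℂ) • 𝒱.nmul 0 a b else 0)) := by
        rw [Finset.sum_sub_distrib, sum_if01 _ _ N hNle, hPdef]
      rw [hsplit]
      exact Submodule.sum_mem _ hterm
    have hQ1mem : Q1 - (𝒱.nmul (-1) a b + (-(q : ℂ)) • 𝒱.nmul 0 a b) ∈ G := by
      have hterm : ∀ i ∈ Finset.range N, (cc q i * (-1 : ℂ) ^ i) • 𝒱.nmul ((i : ℤ) - 1) a b
          - (if i = 0 then 𝒱.nmul (-1) a b
             else if i = 1 then (-(q : ℂ)) • 𝒱.nmul 0 a b else 0) ∈ G := by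
        intro i _
        rcases i with _ | _ | n
        · have e : ((0 : ℕ) : ℤ) - 1 = -1 := by norm_num
          rw [if_pos rfl, e, cc_zero, pow_zero, one_mul, one_smul, sub_self]
          exact G.zero_mem
        · have e : ((1 : ℕ) : ℤ) - 1 = 0 := by norm_num
          rw [if_neg (by omega), if_pos rfl, e, cc_one, pow_one, mul_neg_one, sub_self]
          exact G.zero_mem
        · rw [if_neg (by omega), if_neg (by omega), sub_zero]
          exact Submodule.smul_mem _ _ (hlow _ (by push_cast; omega))
      have hsplit : Q1 - (𝒱.nmul (-1) a b + (-(q : ℂ)) • 𝒱.nmul 0 a b)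
          = ∑ i ∈ Finset.range N, ((cc q i * (-1 : ℂ) ^ i) • 𝒱.nmul ((i : ℤ) - 1) a b
            - (if i = 0 then 𝒱.nmul (-1) a b
               else if i = 1 then (-(q : ℂ)) • 𝒱.nmul 0 a b else 0)) := by
        rw [Finset.sum_sub_distrib, sum_if01 _ _ N hNle, hQ1def]
      rw [hsplit]
      exact Submodule.sum_mem _ hterm
    have hQ2mem : Q2 - (-((p : ℂ) + (q : ℂ) - 1)) • 𝒱.nmul 0 a b ∈ G := by
      have hterm : ∀ i ∈ Finset.range N, (cc q i * (-1 : ℂ) ^ i) • S i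
          - (if i = 0 then (-((p : ℂ) + (q : ℂ) - 1)) • 𝒱.nmul 0 a b else 0) ∈ G := by
        intro i _
        rcases i with _ | n
        · rw [if_pos rfl, cc_zero, pow_zero, one_mul, one_smul]
          -- goal : S 0 - (-(p+q-1)) • nmul 0 a b ∈ G
          have h0 : (0 : ℕ) ∈ Finset.range N := Finset.mem_range.mpr (by omega)
          have hS0 : S 0 = cc (-1) 0 •
                𝒱.nmul (-2 - ((0 : ℕ) : ℤ)) (𝒱.nmul (((0 : ℕ) : ℤ) + ((0 : ℕ) : ℤ)) a b) 𝒱.one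
              + ∑ j ∈ (Finset.range N).erase 0,
                cc (-1) j • 𝒱.nmul (-2 - (j : ℤ)) (𝒱.nmul (((0 : ℕ) : ℤ) + (j : ℤ)) a b) 𝒱.one := by
            rw [hS]
            exact (Finset.add_sum_erase _ _ h0).symm
          have hT0 : cc (-1) 0 •
                𝒱.nmul (-2 - ((0 : ℕ) : ℤ)) (𝒱.nmul (((0 : ℕ) : ℤ) + ((0 : ℕ) : ℤ)) a b) 𝒱.one
              - (-((p : ℂ) + (q : ℂ) - 1)) • 𝒱.nmul 0 a b ∈ OV := by
            have h1 := ML1 𝒱 Vd OV hOV hone hgr (hcmem 0) 1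
            have eidx : (-1 - ((1 : ℕ) : ℤ)) = -2 - ((0 : ℕ) : ℤ) := by norm_num
            have eidx2 : (((0 : ℕ) : ℤ) + ((0 : ℕ) : ℤ)) = (0 : ℤ) := by norm_num
            have ecc : cc (-(p + q - 1 - 0)) 1 = -((p : ℂ) + (q : ℂ) - 1) := by
              rw [cc_one]; push_cast; ring
            rw [eidx, ecc] at h1
            rw [eidx2, cc_zero, one_smul]
            exact h1
          have hrest : (∑ j ∈ (Finset.range N).erase 0,
              cc (-1) j • 𝒱.nmul (-2 - (j : ℤ)) (𝒱.nmul (((0 : ℕ) : ℤ) + (j : ℤ)) a b) 𝒱.one)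
              ∈ G := by
            refine Submodule.sum_mem _ fun j hj => Submodule.smul_mem _ _ ?_
            have hj0 : j ≠ 0 := (Finset.mem_erase.mp hj).1
            exact hTkG (((0 : ℕ) : ℤ) + (j : ℤ)) (by push_cast; omega) j
          have hsplit : S 0 - (-((p : ℂ) + (q : ℂ) - 1)) • 𝒱.nmul 0 a b
              = (cc (-1) 0 •
                  𝒱.nmul (-2 - ((0 : ℕ) : ℤ)) (𝒱.nmul (((0 : ℕ) : ℤ) + ((0 : ℕ) : ℤ)) a b) 𝒱.one
                - (-((p : ℂ) + (q : ℂ) - 1)) • 𝒱.nmul 0 a b)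
                + ∑ j ∈ (Finset.range N).erase 0,
                  cc (-1) j • 𝒱.nmul (-2 - (j : ℤ)) (𝒱.nmul (((0 : ℕ) : ℤ) + (j : ℤ)) a b) 𝒱.one := by
            rw [hS0]; abel
          rw [hsplit]
          exact Submodule.add_mem _ (hOVG hT0) hrest
        · rw [if_neg (by omega), sub_zero]
          refine Submodule.smul_mem _ _ ?_
          have : S (n + 1) ∈ G := by
            rw [hS]
            refine Submodule.sum_mem _ fun j hj => Submodule.smul_mem _ _ ?_
            exact hTkG (((n + 1 : ℕ) : ℤ) + (j : ℤ)) (by push_cast; omega) j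
          exact this
      have hsplit : Q2 - (-((p : ℂ) + (q : ℂ) - 1)) • 𝒱.nmul 0 a b
          = ∑ i ∈ Finset.range N, ((cc q i * (-1 : ℂ) ^ i) • S i
            - (if i = 0 then (-((p : ℂ) + (q : ℂ) - 1)) • 𝒱.nmul 0 a b else 0)) := by
        rw [Finset.sum_sub_distrib, sum_if0 _ N (by omega), hQ2def]
      rw [hsplit]
      exact Submodule.sum_mem _ hterm
    have hfinal : zmul p a b - zmul q b a - 𝒱.nmul 0 a b
        = (P - (𝒱.nmul (-1) a b + (p : ℂ) • 𝒱.nmul 0 a b))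
          - (Q1 - (𝒱.nmul (-1) a b + (-(q : ℂ)) • 𝒱.nmul 0 a b))
          + (Q2 - (-((p : ℂ) + (q : ℂ) - 1)) • 𝒱.nmul 0 a b) := by
      rw [hPz, hbreak]
      module
    rw [hfinal]
    exact Submodule.add_mem _ (Submodule.sub_mem _ hPmem hQ1mem) hQ2mem
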